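/- Let ε ≥ 0, let D and E be persistence diagrams admitting an ε-matching, and let ℓ₁ ≥ ℓ₂ ≥ ⋯ ≥ ℓ_N be the lifetimes of the points of D in decreasing order. If 1 ≤ m < N and η satisfies η > ℓ_{m+1} + 2ε, then E contains at most m points with lifetime strictly greater than η. -/

import Mathlib

/-- The lifetime of a point `p = (b, d)` of a persistence diagram is `d - b`. -/
def lifetime (p : ℝ × ℝ) : ℝ := p.2 - p.1

/-- A persistence diagram is a finite multiset of points `(b, d) ∈ ℝ × ℝ` with `b ≤ d`. -/
def IsDiagram (D : Multiset (ℝ × ℝ)) : Prop := ∀ p ∈ D, p.1 ≤ p.2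

/-- An `ε`-matching between persistence diagrams `D` and `E`, encoded by the multiset
`pairs` of matched pairs: a bijection from a sub-multiset `D' = pairs.map Prod.fst` of `D`
onto a sub-multiset `E' = pairs.map Prod.snd` of `E` such that matched points are within
sup-norm distance `ε`, and every unmatched point has lifetime at most `2ε`. -/
structure IsEMatching (ε : ℝ) (D E : Multiset (ℝ × ℝ))
    (pairs : Multiset ((ℝ × ℝ) × (ℝ × ℝ))) : Prop where
  fst_le : pairs.map Prod.fst ≤ D
  snd_le : pairs.map Prod.snd ≤ E
  close : ∀ pq ∈ pairs, |pq.1.1 - pq.2.1| ≤ ε ∧ |pq.1.2 - pq.2.2| ≤ ε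
  unmatched_left : ∀ p ∈ D - pairs.map Prod.fst, lifetime p ≤ 2 * ε
  unmatched_right : ∀ q ∈ E - pairs.map Prod.snd, lifetime q ≤ 2 * ε

/-- **Upper-bound counting step.** If `D` and `E` admit an `ε`-matching, the lifetimes
`ℓ₁ ≥ ⋯ ≥ ℓ_N` of `D` are sorted decreasingly (here `ℓ ⟨i,_⟩` is `ℓ_{i+1}`), `1 ≤ m < N`,
and `η > ℓ_{m+1} + 2ε`, then `E` has at most `m` points of lifetime strictly greater
than `η`. -/
theorem count_le_of_matching
    {ε : ℝ} (hε : 0 ≤ ε) {D E : Multiset (ℝ × ℝ)}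
    (hD : IsDiagram D) (hE : IsDiagram E)
    {pairs : Multiset ((ℝ × ℝ) × (ℝ × ℝ))} (hmatch : IsEMatching ε D E pairs)
    {N : ℕ} (hN : Multiset.card D = N) (ℓ : Fin N → ℝ) (hsort : Antitone ℓ)
    (hvals : D.map lifetime = Finset.univ.val.map ℓ)
    {m : ℕ} (hm1 : 1 ≤ m) (hmN : m < N)
    {η : ℝ} (hη : ℓ ⟨m, hmN⟩ + 2 * ε < η) :
    Multiset.card (E.filter (fun p => η < lifetime p)) ≤ m := by
  classical
  obtain ⟨F, S, close, uL, uR⟩ := hmatch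
  -- ℓ ⟨m, hmN⟩ is a lifetime of a point of D, hence nonnegative
  have hℓmem : ℓ ⟨m, hmN⟩ ∈ D.map lifetime := by
    rw [hvals]
    exact Multiset.mem_map_of_mem ℓ (Finset.mem_def.1 (Finset.mem_univ _))
  obtain ⟨p₀, hp₀D, hp₀⟩ := Multiset.mem_map.1 hℓmem
  have hℓnn : 0 ≤ ℓ ⟨m, hmN⟩ := hp₀ ▸ sub_nonneg.2 (hD p₀ hp₀D)
  have h2εη : 2 * ε < η := by linarith
  -- Step 1: unmatched points of E don't count
  set E' := pairs.map Prod.snd with hE'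
  have hEsplit : E' + (E - E') = E := add_tsub_cancel_of_le S
  have h1 : Multiset.card (E.filter (fun p => η < lifetime p)) =
      Multiset.card (E'.filter (fun p => η < lifetime p)) := by
    conv_lhs => rw [← hEsplit]
    rw [Multiset.filter_add]
    have : (E - E').filter (fun p => η < lifetime p) = 0 := by
      rw [Multiset.filter_eq_nil]
      intro q hq
      have := uR q hq
      push_neg
      linarith
    rw [this, add_zero]
  -- Step 2: count on E' equals count on pairs
  have h2 : E'.filter (fun p => η < lifetime p) =
      (pairs.filter (fun pq => η < lifetime pq.2)).map Prod.snd := by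
    rw [hE', Multiset.filter_map]
    rfl
  -- Step 3: matched partners lie in D and have lifetime > η - 2ε
  set Sm := (pairs.filter (fun pq => η < lifetime pq.2)).map Prod.fst with hSm
  have h3 : Sm ≤ D.filter (fun p => η - 2 * ε < lifetime p) := by
    rw [Multiset.le_filter]
    constructor
    · exact le_trans (Multiset.map_le_map (Multiset.filter_le _ _)) F
    · intro a ha
      rw [hSm] at ha
      obtain ⟨pq, hpq, rfl⟩ := Multiset.mem_map.1 ha
      have hpq' := Multiset.mem_filter.1 hpq
      have hc := close pq hpq'.1
      have h1' := abs_le.1 hc.1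
      have h2' := abs_le.1 hc.2
      have := hpq'.2
      simp only [lifetime] at *
      linarith
  have hcard3 : Multiset.card (E.filter (fun p => η < lifetime p)) ≤
      Multiset.card (D.filter (fun p => η - 2 * ε < lifetime p)) := by
    rw [h1, h2, Multiset.card_map]
    calc Multiset.card (pairs.filter (fun pq => η < lifetime pq.2))
        = Multiset.card Sm := by rw [hSm, Multiset.card_map]
      _ ≤ _ := Multiset.card_le_card h3
  -- Step 4: count on D is at most m
  have h5 : Multiset.card (D.filter (fun p => η - 2 * ε < lifetime p)) =
      (Finset.univ.filter (fun i : Fin N => η - 2 * ε < ℓ i)).card := by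
    have e1 : Multiset.card (D.filter (fun p => η - 2 * ε < lifetime p)) =
        Multiset.card ((D.map lifetime).filter (fun x => η - 2 * ε < x)) := by
      rw [Multiset.filter_map, Multiset.card_map]
      exact congrArg _ (Multiset.filter_congr (fun a _ => Iff.rfl))
    rw [e1, hvals, Multiset.filter_map, Multiset.card_map]
    rfl
  have h6 : (Finset.univ.filter (fun i : Fin N => η - 2 * ε < ℓ i)).card ≤ m := by
    have hsub : (Finset.univ.filter (fun i : Fin N => η - 2 * ε < ℓ i)) ⊆
        Finset.univ.filter (fun i : Fin N => (i : ℕ) < m) := by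
      intro i hi
      rw [Finset.mem_filter] at hi ⊢
      refine ⟨Finset.mem_univ _, ?_⟩
      by_contra hge
      push_neg at hge
      have : ℓ i ≤ ℓ ⟨m, hmN⟩ := hsort (by exact hge)
      linarith [hi.2]
    calc _ ≤ (Finset.univ.filter (fun i : Fin N => (i : ℕ) < m)).card :=
        Finset.card_le_card hsub
      _ ≤ m := by
        have := Finset.card_le_card_of_injOn (fun i : Fin N => (i : ℕ))
          (s := Finset.univ.filter (fun i : Fin N => (i : ℕ) < m))
          (t := Finset.range m)
          (fun i hi => by simpa using (Finset.mem_filter.1 hi).2)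
          (fun a _ b _ h => Fin.val_injective h)
        simpa using this
  omega
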